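/- arXiv:1805.12454 — 7 statements merged into one kernel-verified Lean document; each statement's English description precedes it below -/
import Mathlib

section
/- Let X be a spectral space. A subset of X is an intersection of quasi-compact open subsets of X (i.e., it is closed with respect to Hochster's inverse topology) if and only if it is saturated and quasi-compact. -/
open Set TopologicalSpace Topology

/-- A subset of a topological space is *inverse-closed* if it is an intersection of a
family of quasi-compact open subsets. -/
def InvClosed {X : Type*} [TopologicalSpace X] (Y : Set X) : Prop :=
  ∃ 𝒪 : Set (Set X), (∀ U ∈ 𝒪, IsOpen U ∧ IsCompact U) ∧ Y = ⋂₀ 𝒪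

/-- A subset is *saturated* if it is an intersection of open sets. -/
def IsSatd {X : Type*} [TopologicalSpace X] (Y : Set X) : Prop :=
  ∃ 𝒪 : Set (Set X), (∀ U ∈ 𝒪, IsOpen U) ∧ Y = ⋂₀ 𝒪

/-- A topological space is *spectral* if it is T0, quasi-compact, sober, and the
quasi-compact open subsets form a basis closed under finite intersections. -/
def IsSpectralSpace (X : Type*) [TopologicalSpace X] : Prop :=
  T0Space X ∧ CompactSpace X ∧ QuasiSober X ∧
    IsTopologicalBasis {U : Set X | IsOpen U ∧ IsCompact U} ∧
    ∀ U V : Set X, IsOpen U → IsCompact U → IsOpen V → IsCompact V → IsCompact (U ∩ V)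

/-- `𝒳(X)`: the nonempty inverse-closed subsets of `X`. -/
abbrev XCal (X : Type*) [TopologicalSpace X] : Type _ :=
  {Y : Set X // Y.Nonempty ∧ InvClosed Y}

/-- The Zariski topology on `𝒳(X)`, with basic open sets `𝒰(Ω) = {Y : Y ⊆ Ω}` for `Ω`
quasi-compact open in `X`. -/
instance XCal.instTop (X : Type*) [TopologicalSpace X] : TopologicalSpace (XCal X) :=
  generateFrom {S : Set (XCal X) | ∃ Ω : Set X, IsOpen Ω ∧ IsCompact Ω ∧
    S = {Y : XCal X | (Y : Set X) ⊆ Ω}}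

/-- The specialization-type order: `x ≤ y` iff `y ∈ closure {x}`. -/
def spord {X : Type*} [TopologicalSpace X] (x y : X) : Prop := y ∈ closure {x}

/-- Closure under generizations of a set `S`: all points `z ≤ s` for some `s ∈ S`. -/
def genOf {X : Type*} [TopologicalSpace X] (S : Set X) : Set X :=
  {z : X | ∃ s ∈ S, spord z s}

/-- A map is *spectral* if preimages of quasi-compact open sets are quasi-compact open. -/
def SpecMap {X Y : Type*} [TopologicalSpace X] [TopologicalSpace Y] (f : X → Y) : Prop :=
  ∀ Ω : Set Y, IsOpen Ω → IsCompact Ω → IsOpen (f ⁻¹' Ω) ∧ IsCompact (f ⁻¹' Ω)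

/-- The constructible topology on a spectral space: generated by the quasi-compact open
sets together with their complements. -/
def constructibleTop (X : Type*) [TopologicalSpace X] : TopologicalSpace X :=
  generateFrom ({U : Set X | IsOpen U ∧ IsCompact U} ∪
    {S : Set X | ∃ U : Set X, IsOpen U ∧ IsCompact U ∧ S = Uᶜ})

/-- `s` is the supremum of `S` for the order induced by the topology. -/
def IsSupOf {X : Type*} [TopologicalSpace X] (S : Set X) (s : X) : Prop :=
  (∀ c ∈ S, spord c s) ∧ ∀ t : X, (∀ c ∈ S, spord c t) → spord s t

/-- A map is sup-preserving if it sends existing finite suprema to suprema. -/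
def SupPreserving {X Y : Type*} [TopologicalSpace X] [TopologicalSpace Y] (f : X → Y) : Prop :=
  ∀ F : Set X, F.Finite → ∀ s : X, IsSupOf F s → IsSupOf (f '' F) (f s)

/-- A map is open onto its image. -/
def OpenOntoImage {X Y : Type*} [TopologicalSpace X] [TopologicalSpace Y] (f : X → Y) : Prop :=
  ∀ V : Set X, IsOpen V → ∃ W : Set Y, IsOpen W ∧ f '' V = W ∩ Set.range f

/-- In a spectral space, a subset is an intersection of quasi-compact
open subsets (i.e. inverse-closed) iff it is saturated and quasi-compact. -/

lemma finset_qcopen {X : Type*} [TopologicalSpace X] (hX : IsSpectralSpace X)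
    {ι : Type*} (U : ι → Set X) (hU : ∀ i, IsOpen (U i) ∧ IsCompact (U i)) (F : Finset ι) :
    IsOpen (⋂ i ∈ F, U i) ∧ IsCompact (⋂ i ∈ F, U i) := by
  classical
  induction F using Finset.induction with
  | empty =>
    simp only [Finset.notMem_empty, iInter_of_empty, iInter_univ]
    exact ⟨isOpen_univ, hX.2.1.isCompact_univ⟩
  | insert _ _ hi ih =>
    rename_i a s
    rw [Finset.set_biInter_insert]
    exact ⟨(hU a).1.inter ih.1,
      hX.2.2.2.2 _ _ (hU a).1 (hU a).2 ih.1 ih.2⟩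

lemma key_lemma {X : Type*} [TopologicalSpace X] (hX : IsSpectralSpace X)
    {ι κ : Type*} (U : ι → Set X) (V : κ → Set X)
    (hU : ∀ i, IsOpen (U i) ∧ IsCompact (U i)) (hV : ∀ j, IsOpen (V j) ∧ IsCompact (V j))
    (h : (⋂ i, U i) ⊆ ⋃ j, V j) :
    ∃ (F : Finset ι) (G : Finset κ), (⋂ i ∈ F, U i) ⊆ ⋃ j ∈ G, V j := by
  classical
  by_contra hcon
  push_neg at hcon
  -- the set of closed sets meeting all finite intersections
  set P : Set (Set X) := {C | IsClosed C ∧ ∀ (F : Finset ι) (G : Finset κ),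
    (C ∩ ((⋂ i ∈ F, U i) ∩ ⋂ j ∈ G, (V j)ᶜ)).Nonempty} with hP
  have hXP : (univ : Set X) ∈ P := by
    refine ⟨isClosed_univ, fun F G => ?_⟩
    rw [univ_inter, nonempty_iff_ne_empty]
    intro he
    refine hcon F G (fun x hx => ?_)
    by_contra hxV
    have hmem : x ∈ (⋂ i ∈ F, U i) ∩ ⋂ j ∈ G, (V j)ᶜ :=
      ⟨hx, mem_iInter₂.mpr fun j hj hxj => hxV (mem_biUnion hj hxj)⟩
    rw [he] at hmem
    exact hmem
  -- Zorn
  obtain ⟨C, -, hCP, hCmin⟩ := zorn_superset_nonempty P (fun c hc hchain hne => by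
    refine ⟨⋂₀ c, ⟨isClosed_sInter (fun s hs => (hc hs).1), fun F G => ?_⟩,
      fun s hs => sInter_subset_of_mem hs⟩
    have hK : IsCompact ((⋂ i ∈ F, U i) ∩ ⋂ j ∈ G, (V j)ᶜ) := by
      refine ((finset_qcopen hX U hU F).2).inter_right ?_
      exact isClosed_biInter (fun j hj => (hV j).1.isClosed_compl)
    rw [sInter_eq_iInter, inter_comm]
    refine hK.inter_iInter_nonempty _ (fun s => (hc s.2).1) (fun t => ?_)
    rcases t.eq_empty_or_nonempty with rfl | htne
    · simp only [Finset.notMem_empty, iInter_of_empty, iInter_univ, inter_univ]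
      obtain ⟨s, hs⟩ := hne
      obtain ⟨x, hx1, hx2⟩ := (hc hs).2 F G
      exact ⟨x, hx2⟩
    · -- a chain's finite nonempty subset has a least element
      have : ∃ m ∈ t, ∀ b ∈ t, (m : Set X) ⊆ b := by
        obtain ⟨m, hm, hmin⟩ := t.exists_minimal htne
        refine ⟨m, hm, fun b hb => ?_⟩
        rcases eq_or_ne m b with rfl | hne2
        · exact subset_rfl
        · rcases hchain m.2 b.2 (fun he' => hne2 (Subtype.coe_injective he')) with h1 | h2
          · exact h1
          · have hbm : b = m := by
              by_contra hbm
              exact hbm (le_antisymm (Subtype.coe_le_coe.mp h2) (hmin hb (Subtype.coe_le_coe.mp h2)))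
            exact le_of_eq (by rw [hbm])
      obtain ⟨m, hmt, hmle⟩ := this
      obtain ⟨x, hx1, hx2⟩ := (hc m.2).2 F G
      exact ⟨x, hx2, mem_iInter₂.mpr fun b hb => hmle b hb hx1⟩) univ hXP
  obtain ⟨hCcl, hCne⟩ := hCP
  -- C is irreducible
  have hCnonempty : C.Nonempty := by
    obtain ⟨x, hx, -⟩ := hCne ∅ ∅
    exact ⟨x, hx⟩
  have hirr : IsIrreducible C := by
    refine ⟨hCnonempty, isPreirreducible_iff_isClosed_union_isClosed.mpr fun z₁ z₂ hz₁ hz₂ hsub => ?_⟩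
    by_contra hboth
    push_neg at hboth
    have h1 : C ∩ z₁ ∉ P := fun hmem =>
      hboth.1 ((hCmin hmem inter_subset_left).trans inter_subset_right)
    have h2 : C ∩ z₂ ∉ P := fun hmem =>
      hboth.2 ((hCmin hmem inter_subset_left).trans inter_subset_right)
    have hc1 : ∃ (F : Finset ι) (G : Finset κ),
        (C ∩ z₁ ∩ ((⋂ i ∈ F, U i) ∩ ⋂ j ∈ G, (V j)ᶜ)) = ∅ := by
      by_contra hco; push_neg at hco
      exact h1 ⟨hCcl.inter hz₁, fun F G => hco F G⟩
    have hc2 : ∃ (F : Finset ι) (G : Finset κ),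
        (C ∩ z₂ ∩ ((⋂ i ∈ F, U i) ∩ ⋂ j ∈ G, (V j)ᶜ)) = ∅ := by
      by_contra hco; push_neg at hco
      exact h2 ⟨hCcl.inter hz₂, fun F G => hco F G⟩
    obtain ⟨F1, G1, he1⟩ := hc1
    obtain ⟨F2, G2, he2⟩ := hc2
    obtain ⟨x, hxC, hxU, hxV⟩ := hCne (F1 ∪ F2) (G1 ∪ G2)
    have hxz : x ∈ z₁ ∪ z₂ := hsub hxC
    simp only [mem_iInter, Finset.mem_union] at hxU hxV
    rcases hxz with hx1 | hx2
    · have : x ∈ (C ∩ z₁ ∩ ((⋂ i ∈ F1, U i) ∩ ⋂ j ∈ G1, (V j)ᶜ)) :=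
        ⟨⟨hxC, hx1⟩, mem_iInter₂.mpr fun i hi => hxU i (Or.inl hi),
          mem_iInter₂.mpr fun j hj => hxV j (Or.inl hj)⟩
      simp [he1] at this
    · have : x ∈ (C ∩ z₂ ∩ ((⋂ i ∈ F2, U i) ∩ ⋂ j ∈ G2, (V j)ᶜ)) :=
        ⟨⟨hxC, hx2⟩, mem_iInter₂.mpr fun i hi => hxU i (Or.inr hi),
          mem_iInter₂.mpr fun j hj => hxV j (Or.inr hj)⟩
      simp [he2] at this
  -- generic point
  haveI := hX.2.2.1
  have hgen : IsGenericPoint (hirr.genericPoint) C := hirr.isGenericPoint_genericPoint hCcl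
  set x := hirr.genericPoint with hxdef
  have hxC : x ∈ C := by rw [← hgen]; exact subset_closure rfl
  -- x ∈ U i for all i
  have hxU : ∀ i, x ∈ U i := by
    intro i
    obtain ⟨y, hyC, hyU, -⟩ := hCne {i} ∅
    simp only [Finset.mem_singleton, iInter_iInter_eq_left] at hyU
    have : y ∈ closure ({x} : Set X) := by rw [hgen]; exact hyC
    obtain ⟨z, hz1, hz2⟩ := mem_closure_iff.mp this _ (hU i).1 hyU
    rwa [← hz2]
  -- x ∉ V j for all j
  have hxV : ∀ j, x ∉ V j := by
    intro j hxj
    have hD : C ∩ (V j)ᶜ ∉ P := by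
      intro hmem
      exact (hCmin hmem inter_subset_left hxC).2 hxj
    have : ∃ (F : Finset ι) (G : Finset κ),
        (C ∩ (V j)ᶜ ∩ ((⋂ i ∈ F, U i) ∩ ⋂ j ∈ G, (V j)ᶜ)) = ∅ := by
      by_contra hco; push_neg at hco
      exact hD ⟨hCcl.inter (hV j).1.isClosed_compl,
        fun F G => hco F G⟩
    obtain ⟨F, G, he⟩ := this
    obtain ⟨y, hyC, hyU, hyV⟩ := hCne F (insert j G)
    simp only [mem_iInter, Finset.mem_insert] at hyV
    have : y ∈ (C ∩ (V j)ᶜ ∩ ((⋂ i ∈ F, U i) ∩ ⋂ j' ∈ G, (V j')ᶜ)) :=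
      ⟨⟨hyC, hyV j (Or.inl rfl)⟩, hyU, mem_iInter₂.mpr fun j' hj' => hyV j' (Or.inr hj')⟩
    simp [he] at this
  obtain ⟨j, hj⟩ := mem_iUnion.mp (h (mem_iInter.mpr hxU))
  exact hxV j hj

theorem stmt1 {X : Type*} [TopologicalSpace X] (hX : IsSpectralSpace X) (Y : Set X) :
    InvClosed Y ↔ IsSatd Y ∧ IsCompact Y := by
  classical
  constructor
  · rintro ⟨𝒪, h𝒪, rfl⟩
    refine ⟨⟨𝒪, fun U hU => (h𝒪 U hU).1, rfl⟩, ?_⟩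
    refine isCompact_of_finite_subcover fun {ι'} V hVopen hcover => ?_
    set T := {W : Set X // (IsOpen W ∧ IsCompact W) ∧ ∃ j : ι', W ⊆ V j} with hT
    have hcov2 : (⋂ O : 𝒪, (O : Set X)) ⊆ ⋃ W : T, (W : Set X) := by
      intro x hx
      have hx' : x ∈ ⋃ j, V j := hcover (by rwa [sInter_eq_iInter])
      obtain ⟨j, hj⟩ := mem_iUnion.mp hx'
      obtain ⟨W, hW, hxW, hWV⟩ := hX.2.2.2.1.exists_subset_of_mem_open hj (hVopen j)
      exact mem_iUnion.mpr ⟨⟨W, hW, j, hWV⟩, hxW⟩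
    obtain ⟨F, G, hFG⟩ := key_lemma hX (fun O : 𝒪 => (O : Set X)) (fun W : T => (W : Set X))
      (fun O => h𝒪 O O.2) (fun W => W.2.1) hcov2
    refine ⟨G.image (fun W => W.2.2.choose), fun x hx => ?_⟩
    have hxF : x ∈ ⋂ O ∈ F, (O : Set X) := by
      refine mem_iInter₂.mpr fun O _ => ?_
      rw [sInter_eq_iInter] at hx
      exact mem_iInter.mp hx O
    obtain ⟨W, hWG, hxW⟩ := mem_iUnion₂.mp (hFG hxF)
    refine mem_iUnion₂.mpr ⟨W.2.2.choose, Finset.mem_image_of_mem _ hWG, ?_⟩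
    exact W.2.2.choose_spec hxW
  · rintro ⟨⟨𝒪, hop, hY⟩, hcomp⟩
    refine ⟨{U : Set X | (IsOpen U ∧ IsCompact U) ∧ Y ⊆ U}, fun U hU => hU.1, ?_⟩
    refine Subset.antisymm (fun x hx => mem_sInter.mpr fun U hU => hU.2 hx) ?_
    intro x hx
    by_contra hxY
    obtain ⟨O, hO𝒪, hxO⟩ : ∃ O ∈ 𝒪, x ∉ O := by
      by_contra hall
      push_neg at hall
      exact hxY (hY ▸ mem_sInter.mpr hall)
    have hYO : Y ⊆ O := hY ▸ sInter_subset_of_mem hO𝒪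
    set T := {W : Set X // (IsOpen W ∧ IsCompact W) ∧ W ⊆ O} with hT
    have hYcov : Y ⊆ ⋃ W : T, (W : Set X) := by
      intro y hy
      obtain ⟨W, hW, hyW, hWO⟩ := hX.2.2.2.1.exists_subset_of_mem_open (hYO hy) (hop O hO𝒪)
      exact mem_iUnion.mpr ⟨⟨W, hW, hWO⟩, hyW⟩
    obtain ⟨t, ht⟩ := hcomp.elim_finite_subcover (fun W : T => (W : Set X))
      (fun W => W.2.1.1) hYcov
    have hU0 : (⋃ W ∈ t, (W : Set X)) ∈ {U : Set X | (IsOpen U ∧ IsCompact U) ∧ Y ⊆ U} := by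
      refine ⟨⟨isOpen_biUnion fun W _ => W.2.1.1, t.isCompact_biUnion fun W _ => W.2.1.2⟩, ht⟩
    have := mem_sInter.mp hx _ hU0
    obtain ⟨W, hWt, hxW⟩ := mem_iUnion₂.mp this
    exact hxO (W.2.2 hxW)
end

section
/- For a topological space X, the following are equivalent: (i) X is a spectral space; (ii) X is stably compact and the quasi-compact open subsets of X form a basis for the topology. -/
open Set TopologicalSpace Topology

/-- A topological space is *stably compact* if it is T0, quasi-compact, locally
quasi-compact, coherent and sober. -/
def IsStablyCompact (X : Type*) [TopologicalSpace X] : Prop :=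
  T0Space X ∧ CompactSpace X ∧
    (∀ U : Set X, IsOpen U → ∀ x ∈ U,
      ∃ K V : Set X, IsCompact K ∧ IsOpen V ∧ x ∈ V ∧ V ⊆ K ∧ K ⊆ U) ∧
    (∀ 𝒦 : Set (Set X), 𝒦.Finite → (∀ K ∈ 𝒦, IsCompact K ∧ IsSatd K) →
      IsCompact (⋂₀ 𝒦)) ∧
    QuasiSober X

lemma chain_finset_min {α : Type*} {c : Set (Set α)} (hc : IsChain (· ⊆ ·) c)
    (u : Finset (Set α)) : ↑u ⊆ c → u.Nonempty → ∃ i ∈ u, ∀ j ∈ u, i ⊆ j := by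
  classical
  induction u using Finset.induction_on with
  | empty => intro _ h; simp at h
  | @insert a u ha ih =>
    intro hsub _
    rcases u.eq_empty_or_nonempty with rfl | hune
    · exact ⟨a, Finset.mem_insert_self a _, by simp⟩
    · have hsub' : ↑u ⊆ c := fun x hx => hsub (by simp [hx])
      obtain ⟨i, hi, hmin⟩ := ih hsub' hune
      have hac : a ∈ c := hsub (by simp)
      have hic : i ∈ c := hsub' hi
      rcases eq_or_ne a i with rfl | hne'
      · refine ⟨a, Finset.mem_insert_self a _, fun j hj => ?_⟩
        rcases Finset.mem_insert.1 hj with rfl | hj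
        · exact subset_rfl
        · exact hmin j hj
      · rcases hc hac hic hne' with h | h
        · refine ⟨a, Finset.mem_insert_self a _, fun j hj => ?_⟩
          rcases Finset.mem_insert.1 hj with rfl | hj
          · exact subset_rfl
          · exact h.trans (hmin j hj)
        · refine ⟨i, Finset.mem_insert_of_mem hi, fun j hj => ?_⟩
          rcases Finset.mem_insert.1 hj with rfl | hj
          · exact h
          · exact hmin j hj

lemma key_lemma_s2 {X : Type*} [TopologicalSpace X] [QuasiSober X]
    (𝒪 : Set (Set X)) (hqc : ∀ Ω ∈ 𝒪, IsOpen Ω ∧ IsCompact Ω)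
    (hne : 𝒪.Nonempty)
    (hdir : ∀ A ∈ 𝒪, ∀ B ∈ 𝒪, ∃ C ∈ 𝒪, C ⊆ A ∩ B)
    {U : Set X} (hU : IsOpen U) (hsub : ⋂₀ 𝒪 ⊆ U) : ∃ Ω ∈ 𝒪, Ω ⊆ U := by
  classical
  by_contra hcon
  push_neg at hcon
  set S : Set (Set X) := {C | IsClosed C ∧ C ⊆ Uᶜ ∧ ∀ Ω ∈ 𝒪, (C ∩ Ω).Nonempty} with hSdef
  have hUc : Uᶜ ∈ S := by
    refine ⟨hU.isClosed_compl, subset_rfl, fun Ω hΩ => ?_⟩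
    obtain ⟨x, hxΩ, hxU⟩ := not_subset.1 (hcon Ω hΩ)
    exact ⟨x, hxU, hxΩ⟩
  have hzorn : ∀ c ⊆ S, IsChain (· ⊆ ·) c → c.Nonempty → ∃ lb ∈ S, ∀ s ∈ c, lb ⊆ s := by
    intro c hcS hchain hcne
    refine ⟨⋂₀ c, ⟨isClosed_sInter fun C hC => (hcS hC).1, ?_, ?_⟩,
      fun s hs => sInter_subset_of_mem hs⟩
    · obtain ⟨C₀, hC₀⟩ := hcne
      exact (sInter_subset_of_mem hC₀).trans (hcS hC₀).2.1
    · intro Ω hΩ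
      by_contra hempty
      rw [Set.not_nonempty_iff_eq_empty] at hempty
      have hΩc := (hqc Ω hΩ).2
      have heq : (Ω ∩ ⋂ (C : c), (C : Set X)) = ∅ := by
        rw [← hempty, Set.inter_comm, sInter_eq_iInter]
      obtain ⟨u, hu⟩ := hΩc.elim_finite_subfamily_closed _ (fun C : c => (hcS C.2).1) heq
      rcases u.eq_empty_or_nonempty with rfl | hune
      · simp only [Finset.notMem_empty, iInter_of_empty, iInter_univ, inter_univ] at hu
        obtain ⟨C₀, hC₀⟩ := hcne
        obtain ⟨x, hx⟩ := (hcS hC₀).2.2 Ω hΩ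
        exact absurd (hu ▸ hx.2) (Set.notMem_empty x)
      · obtain ⟨i, hi, hmin⟩ := chain_finset_min hchain (u.image (fun C : c => (C : Set X)))
          (by intro x hx
              simp only [Finset.coe_image, Set.mem_image, Finset.mem_coe] at hx
              obtain ⟨C, _, rfl⟩ := hx; exact C.2) (hune.image _)
        simp only [Finset.mem_image] at hi
        obtain ⟨C, hCu, rfl⟩ := hi
        obtain ⟨x, hxC, hxΩ⟩ := (hcS C.2).2.2 Ω hΩ
        have hxmem : x ∈ Ω ∩ ⋂ D ∈ u, (D : Set X) := by
          refine ⟨hxΩ, ?_⟩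
          simp only [Set.mem_iInter]
          intro D hD
          exact hmin (D : Set X) (Finset.mem_image_of_mem _ hD) hxC
        exact absurd (hu ▸ hxmem) (Set.notMem_empty x)
  obtain ⟨C, hCsubUc, hCmin⟩ := zorn_superset_nonempty S hzorn Uᶜ hUc
  obtain ⟨hCcl, hCU', hCmeet⟩ := hCmin.prop
  have hCne : C.Nonempty := by
    obtain ⟨Ω, hΩ⟩ := hne
    obtain ⟨x, hx⟩ := hCmeet Ω hΩ
    exact ⟨x, hx.1⟩
  have hirr : IsIrreducible C := by
    refine ⟨hCne, fun V₁ V₂ hV₁ hV₂ h₁ h₂ => ?_⟩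
    have key : ∀ V : Set X, IsOpen V → (C ∩ V).Nonempty → ∃ Ω ∈ 𝒪, C ∩ Ω ⊆ V := by
      intro V hV hCV
      by_contra h
      push_neg at h
      have hmem : C ∩ Vᶜ ∈ S := by
        refine ⟨hCcl.inter hV.isClosed_compl, inter_subset_left.trans hCU', fun Ω hΩ => ?_⟩
        obtain ⟨x, hx, hxV⟩ := not_subset.1 (h Ω hΩ)
        exact ⟨x, ⟨hx.1, hxV⟩, hx.2⟩
      have hCsub : C ⊆ C ∩ Vᶜ := hCmin.2 hmem inter_subset_left
      obtain ⟨x, hxC, hxV⟩ := hCV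
      exact (hCsub hxC).2 hxV
    obtain ⟨Ω₁, hΩ₁, hs₁⟩ := key V₁ hV₁ h₁
    obtain ⟨Ω₂, hΩ₂, hs₂⟩ := key V₂ hV₂ h₂
    obtain ⟨Ω₃, hΩ₃, hs₃⟩ := hdir Ω₁ hΩ₁ Ω₂ hΩ₂
    obtain ⟨x, hxC, hxΩ₃⟩ := hCmeet Ω₃ hΩ₃
    exact ⟨x, hxC, hs₁ ⟨hxC, (hs₃ hxΩ₃).1⟩, hs₂ ⟨hxC, (hs₃ hxΩ₃).2⟩⟩
  obtain ⟨x, hx⟩ := QuasiSober.sober hirr hCcl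
  have hxall : x ∈ ⋂₀ 𝒪 := by
    intro Ω hΩ
    exact (hx.mem_open_set_iff (hqc Ω hΩ).1).2 (hCmeet Ω hΩ)
  exact (hCU' hx.mem) (hsub hxall)

lemma key_compact {X : Type*} [TopologicalSpace X] [QuasiSober X]
    (𝒪 : Set (Set X)) (hqc : ∀ Ω ∈ 𝒪, IsOpen Ω ∧ IsCompact Ω)
    (hne : 𝒪.Nonempty)
    (hdir : ∀ A ∈ 𝒪, ∀ B ∈ 𝒪, ∃ C ∈ 𝒪, C ⊆ A ∩ B) : IsCompact (⋂₀ 𝒪) := by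
  apply isCompact_of_finite_subcover
  intro ι Us hUs hcov
  obtain ⟨Ω, hΩ, hΩsub⟩ := key_lemma_s2 𝒪 hqc hne hdir (isOpen_iUnion hUs) hcov
  obtain ⟨t, ht⟩ := (hqc Ω hΩ).2.elim_finite_subcover Us hUs hΩsub
  exact ⟨t, (sInter_subset_of_mem hΩ).trans ht⟩

lemma satd_eq {X : Type*} [TopologicalSpace X]
    (hbasis : IsTopologicalBasis {U : Set X | IsOpen U ∧ IsCompact U})
    {K : Set X} (hK : IsCompact K)
    (hKs : ∃ 𝒪 : Set (Set X), (∀ U ∈ 𝒪, IsOpen U) ∧ K = ⋂₀ 𝒪) :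
    K = ⋂₀ {Ω : Set X | (IsOpen Ω ∧ IsCompact Ω) ∧ K ⊆ Ω} := by
  apply Subset.antisymm
  · exact fun x hx Ω hΩ => hΩ.2 hx
  · intro x hx
    by_contra hxK
    obtain ⟨𝒪₀, h𝒪₀, hKeq⟩ := hKs
    have hexU : ∃ U ∈ 𝒪₀, x ∉ U := by
      by_contra h
      push_neg at h
      exact hxK (hKeq ▸ fun U hU => h U hU)
    obtain ⟨U, hU, hxU⟩ := hexU
    have hKU : K ⊆ U := hKeq ▸ sInter_subset_of_mem hU
    have hcov : ∀ y : K, ∃ W : Set X, (IsOpen W ∧ IsCompact W) ∧ (y : X) ∈ W ∧ W ⊆ U :=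
      fun y => hbasis.exists_subset_of_mem_open (hKU y.2) (h𝒪₀ U hU)
    choose W hWqc hyW hWU using hcov
    obtain ⟨t, ht⟩ := hK.elim_finite_subcover W (fun i => (hWqc i).1)
      (fun y hy => mem_iUnion.2 ⟨⟨y, hy⟩, hyW ⟨y, hy⟩⟩)
    set Ω : Set X := ⋃ i ∈ t, W i with hΩdef
    have hΩmem : Ω ∈ {Ω : Set X | (IsOpen Ω ∧ IsCompact Ω) ∧ K ⊆ Ω} := by
      refine ⟨⟨isOpen_biUnion fun i _ => (hWqc i).1,
        t.finite_toSet.isCompact_biUnion fun i _ => (hWqc i).2⟩, ht⟩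
    have hxΩ : x ∈ Ω := hx Ω hΩmem
    obtain ⟨i, _, hxW⟩ := mem_iUnion₂.1 hxΩ
    exact hxU (hWU i hxW)

lemma finite_sInter_qc {X : Type*} [TopologicalSpace X] [CompactSpace X]
    (hcap : ∀ U V : Set X, IsOpen U → IsCompact U → IsOpen V → IsCompact V → IsCompact (U ∩ V))
    (F : Set (Set X)) (hF : F.Finite) :
    (∀ U ∈ F, IsOpen U ∧ IsCompact U) → IsOpen (⋂₀ F) ∧ IsCompact (⋂₀ F) := by
  refine Set.Finite.induction_on (motive := fun F _ => (∀ U ∈ F, IsOpen U ∧ IsCompact U) → IsOpen (⋂₀ F) ∧ IsCompact (⋂₀ F)) F hF (fun _ => ?_) ?_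
  · rw [sInter_empty]; exact ⟨isOpen_univ, isCompact_univ⟩
  · intro a s _ _ ih h
    have hih := ih (fun U hU => h U (Set.mem_insert_of_mem a hU))
    have haqc := h a (Set.mem_insert a s)
    rw [sInter_insert]
    exact ⟨haqc.1.inter hih.1, hcap a (⋂₀ s) haqc.1 haqc.2 hih.1 hih.2⟩

lemma spectral_coherent' {X : Type*} [TopologicalSpace X] [CompactSpace X] [QuasiSober X]
    (hbasis : IsTopologicalBasis {U : Set X | IsOpen U ∧ IsCompact U})
    (hcap : ∀ U V : Set X, IsOpen U → IsCompact U → IsOpen V → IsCompact V → IsCompact (U ∩ V))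
    (𝒦 : Set (Set X)) (h𝒦fin : 𝒦.Finite)
    (h𝒦 : ∀ K ∈ 𝒦, IsCompact K ∧
      ∃ 𝒪 : Set (Set X), (∀ U ∈ 𝒪, IsOpen U) ∧ K = ⋂₀ 𝒪) :
    IsCompact (⋂₀ 𝒦) := by
  set 𝒪' : Set (Set X) := {Ω | (IsOpen Ω ∧ IsCompact Ω) ∧ ∃ K ∈ 𝒦, K ⊆ Ω} with h𝒪'def
  have h1 : ⋂₀ 𝒦 = ⋂₀ 𝒪' := by
    apply Subset.antisymm
    · rintro x hx Ω ⟨hΩqc, K, hK, hKΩ⟩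
      exact hKΩ (hx K hK)
    · intro x hx K hK
      rw [satd_eq hbasis (h𝒦 K hK).1 (h𝒦 K hK).2]
      intro Ω hΩ
      exact hx Ω ⟨hΩ.1, K, hK, hΩ.2⟩
  set 𝒪 : Set (Set X) := {Ω | ∃ F : Set (Set X), F.Finite ∧ F ⊆ 𝒪' ∧ Ω = ⋂₀ F} with h𝒪def
  have h2 : ⋂₀ 𝒪' = ⋂₀ 𝒪 := by
    apply Subset.antisymm
    · rintro x hx Ω ⟨F, hFfin, hF𝒪', rfl⟩
      exact fun A hA => hx A (hF𝒪' hA)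
    · intro x hx Ω hΩ
      exact hx Ω ⟨{Ω}, finite_singleton _, by simpa using hΩ, (sInter_singleton Ω).symm⟩
  rw [h1, h2]
  apply key_compact
  · rintro Ω ⟨F, hFfin, hF, rfl⟩
    exact finite_sInter_qc hcap F hFfin (fun U hU => (hF hU).1)
  · exact ⟨Set.univ, ∅, finite_empty, empty_subset _, sInter_empty.symm⟩
  · rintro A ⟨F₁, h₁, hs₁, rfl⟩ B ⟨F₂, h₂, hs₂, rfl⟩
    refine ⟨⋂₀ (F₁ ∪ F₂), ⟨F₁ ∪ F₂, h₁.union h₂, union_subset hs₁ hs₂, rfl⟩, ?_⟩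
    rw [sInter_union]

/-- A space is spectral iff it is stably compact and the quasi-compact
open subsets form a basis of its topology. -/
theorem stmt2 {X : Type*} [TopologicalSpace X] :
    IsSpectralSpace X ↔
      IsStablyCompact X ∧ IsTopologicalBasis {U : Set X | IsOpen U ∧ IsCompact U} := by
  constructor
  · rintro ⟨ht0, hcpt, hsober, hbasis, hcap⟩
    haveI := hcpt; haveI := hsober
    refine ⟨⟨ht0, hcpt, ?_, ?_, hsober⟩, hbasis⟩
    · intro U hU x hx
      obtain ⟨V, ⟨hVo, hVc⟩, hxV, hVU⟩ := hbasis.exists_subset_of_mem_open hx hU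
      exact ⟨V, V, hVc, hVo, hxV, subset_rfl, hVU⟩
    · intro 𝒦 h𝒦fin h𝒦
      exact spectral_coherent' hbasis hcap 𝒦 h𝒦fin (fun K hK => ⟨(h𝒦 K hK).1, (h𝒦 K hK).2⟩)
  · rintro ⟨⟨ht0, hcpt, _, hcoh, hsober⟩, hbasis⟩
    refine ⟨ht0, hcpt, hsober, hbasis, ?_⟩
    intro U V hUo hUc hVo hVc
    have h := hcoh {U, V} (by simp) ?_
    · simpa [sInter_pair] using h
    · intro K hK
      rcases hK with rfl | rfl
      · exact ⟨hUc, {K}, by simpa using hUo, (sInter_singleton K).symm⟩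
      · exact ⟨hVc, {K}, by simpa using hVo, (sInter_singleton K).symm⟩
end

section
/- Let X be a spectral space. On the set of all nonempty quasi-compact saturated subsets of X (which coincides with the set 𝒳(X) of nonempty inverse-closed subsets of X), the Zariski topology coincides with the upper Vietoris topology, i.e., the topology whose basic open sets are U⁺ := {Q : Q nonempty quasi-compact saturated, Q ⊆ U} for U ranging over all open subsets of X. -/
open Set TopologicalSpace Topology

/-- The upper Vietoris topology on `𝒳(X)`: basic open sets are
`U⁺ = {Q : Q ⊆ U}` for `U` open in `X`. -/
def upperVietorisTop (X : Type*) [TopologicalSpace X] : TopologicalSpace (XCal X) :=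
  generateFrom {S : Set (XCal X) | ∃ U : Set X, IsOpen U ∧
    S = {Q : XCal X | (Q : Set X) ⊆ U}}

/-- Squeeze a quasi-compact open set between a compact set and an open set. -/
lemma spectral_squeeze {X : Type*} [TopologicalSpace X] (hX : IsSpectralSpace X)
    {Q U : Set X} (hQ : IsCompact Q) (hU : IsOpen U) (hQU : Q ⊆ U) :
    ∃ Ω : Set X, IsOpen Ω ∧ IsCompact Ω ∧ Q ⊆ Ω ∧ Ω ⊆ U := by
  obtain ⟨-, -, -, hbasis, -⟩ := hX
  have hcover : ∀ x : X, x ∈ Q → ∃ V : Set X, (IsOpen V ∧ IsCompact V) ∧ x ∈ V ∧ V ⊆ U :=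
    fun x hx => by
      obtain ⟨V, hV, hxV, hVU⟩ := hbasis.exists_subset_of_mem_open (hQU hx) hU
      exact ⟨V, hV, hxV, hVU⟩
  choose! V hV hxV hVU using hcover
  obtain ⟨t, htQ, htcov⟩ := hQ.elim_nhds_subcover V
    (fun x hx => (hV x hx).1.mem_nhds (hxV x hx))
  refine ⟨⋃ x ∈ t, V x, isOpen_biUnion fun x hx => (hV x (htQ x hx)).1,
    t.isCompact_biUnion fun x hx => (hV x (htQ x hx)).2, htcov,
    iUnion₂_subset fun x hx => hVU x (htQ x hx)⟩

/-- Given an ultrafilter on a spectral space, there is a point belonging exactly to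
the quasi-compact open sets in the ultrafilter. -/
lemma spectral_ultrafilter_point {X : Type*} [TopologicalSpace X] (hX : IsSpectralSpace X)
    (F : Ultrafilter X) :
    ∃ x : X, ∀ Ω : Set X, IsOpen Ω → IsCompact Ω → (Ω ∈ F ↔ x ∈ Ω) := by
  obtain ⟨-, hcpt, hsober, hbasis, hinter⟩ := hX
  set ι : Type _ := {Ω : Set X // IsOpen Ω ∧ IsCompact Ω ∧ Ω ∉ F} with hι
  set C : Set X := ⋂ i : ι, (↑i : Set X)ᶜ with hC
  have hCclosed : IsClosed C := isClosed_iInter fun i => i.2.1.isClosed_compl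
  -- key claim: every qc open set in F meets C
  have meets : ∀ Ω : Set X, IsOpen Ω → IsCompact Ω → Ω ∈ F → (Ω ∩ C).Nonempty := by
    intro Ω hΩo hΩc hΩF
    refine hΩc.inter_iInter_nonempty (fun i : ι => (↑i : Set X)ᶜ)
      (fun i => i.2.1.isClosed_compl) (fun u => ?_)
    by_contra hemp
    rw [Set.not_nonempty_iff_eq_empty] at hemp
    have hsub : Ω ⊆ ⋃ i ∈ u, (↑i : Set X) := by
      intro x hx
      by_contra hxn
      have : x ∈ Ω ∩ ⋂ i ∈ u, (↑i : Set X)ᶜ := by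
        refine ⟨hx, Set.mem_iInter₂.2 fun i hi => ?_⟩
        exact fun hxi => hxn (Set.mem_iUnion₂.2 ⟨i, hi, hxi⟩)
      simp [hemp] at this
    have hmem : (⋃ i ∈ u, (↑i : Set X)) ∈ F := Filter.mem_of_superset hΩF hsub
    rw [show (⋃ i ∈ u, (↑i : Set X)) = ⋃ i ∈ (u : Set ι), (↑i : Set X) by simp] at hmem
    obtain ⟨i, -, hiF⟩ := (Ultrafilter.finite_biUnion_mem_iff u.finite_toSet).1 hmem
    exact i.2.2.2 hiF
  have hCne : C.Nonempty := by
    have := meets Set.univ isOpen_univ CompactSpace.isCompact_univ Filter.univ_mem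
    simpa using this
  -- C is irreducible
  have hmemF : ∀ Ω : Set X, IsOpen Ω → IsCompact Ω → (C ∩ Ω).Nonempty → Ω ∈ F := by
    intro Ω hΩo hΩc ⟨y, hyC, hyΩ⟩
    by_contra hn
    exact (Set.mem_iInter.1 hyC ⟨Ω, hΩo, hΩc, hn⟩) hyΩ
  have hirr : IsIrreducible C := by
    refine ⟨hCne, fun U V hU hV hCU hCV => ?_⟩
    obtain ⟨y, hyC, hyU⟩ := hCU
    obtain ⟨Ω₁, ⟨hΩ₁o, hΩ₁c⟩, hyΩ₁, hΩ₁U⟩ := hbasis.exists_subset_of_mem_open hyU hU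
    obtain ⟨z, hzC, hzV⟩ := hCV
    obtain ⟨Ω₂, ⟨hΩ₂o, hΩ₂c⟩, hzΩ₂, hΩ₂V⟩ := hbasis.exists_subset_of_mem_open hzV hV
    have h₁ : Ω₁ ∈ F := hmemF Ω₁ hΩ₁o hΩ₁c ⟨y, hyC, hyΩ₁⟩
    have h₂ : Ω₂ ∈ F := hmemF Ω₂ hΩ₂o hΩ₂c ⟨z, hzC, hzΩ₂⟩
    have h12 : Ω₁ ∩ Ω₂ ∈ F := Filter.inter_mem h₁ h₂
    obtain ⟨w, hwΩ, hwC⟩ := meets (Ω₁ ∩ Ω₂) (hΩ₁o.inter hΩ₂o)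
      (hinter _ _ hΩ₁o hΩ₁c hΩ₂o hΩ₂c) h12
    exact ⟨w, hwC, hΩ₁U hwΩ.1, hΩ₂V hwΩ.2⟩
  obtain ⟨x, hx⟩ := hsober.sober hirr hCclosed
  have hxC : x ∈ C := hx ▸ subset_closure rfl
  refine ⟨x, fun Ω hΩo hΩc => ⟨fun hΩF => ?_, fun hxΩ => ?_⟩⟩
  · obtain ⟨y, hyΩ, hyC⟩ := meets Ω hΩo hΩc hΩF
    rw [← hx] at hyC
    obtain ⟨z, hzΩ, hz⟩ := mem_closure_iff.1 hyC Ω hΩo hyΩ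
    rwa [Set.mem_singleton_iff.1 hz] at hzΩ
  · by_contra hn
    exact (Set.mem_iInter.1 hxC ⟨Ω, hΩo, hΩc, hn⟩) hxΩ

/-- An inverse-closed subset of a spectral space is compact. -/
lemma InvClosed.isCompact_of_spectral {X : Type*} [TopologicalSpace X]
    (hX : IsSpectralSpace X) {Y : Set X} (hY : InvClosed Y) : IsCompact Y := by
  obtain ⟨𝒪, h𝒪, rfl⟩ := hY
  rw [isCompact_iff_ultrafilter_le_nhds]
  intro F hF
  obtain ⟨x, hx⟩ := spectral_ultrafilter_point hX F
  have hYF : ⋂₀ 𝒪 ∈ F := hF (Filter.mem_principal_self _)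
  have hxY : x ∈ ⋂₀ 𝒪 := by
    intro U hU
    exact (hx U (h𝒪 U hU).1 (h𝒪 U hU).2).1
      (Filter.mem_of_superset hYF (Set.sInter_subset_of_mem hU))
  refine ⟨x, hxY, fun s hs => ?_⟩
  obtain ⟨U, hUs, hUo, hxU⟩ := mem_nhds_iff.1 hs
  obtain ⟨-, -, -, hbasis, -⟩ := hX
  obtain ⟨Ω, ⟨hΩo, hΩc⟩, hxΩ, hΩU⟩ := hbasis.exists_subset_of_mem_open hxU hUo
  exact Filter.mem_of_superset ((hx Ω hΩo hΩc).2 hxΩ) (hΩU.trans hUs)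

/-- In a spectral space, the nonempty quasi-compact saturated subsets
are exactly the nonempty inverse-closed subsets, and on `𝒳(X)` the Zariski
topology coincides with the upper Vietoris topology. -/
theorem stmt3 {X : Type*} [TopologicalSpace X] (hX : IsSpectralSpace X) :
    {Y : Set X | Y.Nonempty ∧ IsCompact Y ∧ IsSatd Y} =
      {Y : Set X | Y.Nonempty ∧ InvClosed Y} ∧
    XCal.instTop X = upperVietorisTop X := by
  constructor
  · ext Y
    simp only [Set.mem_setOf_eq]
    constructor
    · rintro ⟨hne, hc, 𝒪, h𝒪, rfl⟩
      refine ⟨hne, {Ω : Set X | (IsOpen Ω ∧ IsCompact Ω) ∧ ⋂₀ 𝒪 ⊆ Ω},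
        fun Ω hΩ => hΩ.1, ?_⟩
      apply Set.Subset.antisymm
      · exact fun x hx => Set.mem_sInter.2 fun Ω hΩ => hΩ.2 hx
      · intro x hx
        by_contra hxn
        have : ∃ U ∈ 𝒪, x ∉ U := by
          by_contra h
          push_neg at h
          exact hxn (Set.mem_sInter.2 h)
        obtain ⟨U, hU𝒪, hxU⟩ := this
        obtain ⟨Ω, hΩo, hΩc, hYΩ, hΩU⟩ := spectral_squeeze hX hc (h𝒪 U hU𝒪)
          (Set.sInter_subset_of_mem hU𝒪)
        exact hxU (hΩU (Set.mem_sInter.1 hx Ω ⟨⟨hΩo, hΩc⟩, hYΩ⟩))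
    · rintro ⟨hne, hinv⟩
      refine ⟨hne, hinv.isCompact_of_spectral hX, ?_⟩
      obtain ⟨𝒪, h𝒪, hY⟩ := hinv
      exact ⟨𝒪, fun U hU => (h𝒪 U hU).1, hY⟩
  · apply le_antisymm
    · -- Zariski ≤ Vietoris: every Vietoris generator is Zariski-open
      apply le_generateFrom
      rintro S ⟨U, hU, rfl⟩
      have : {Q : XCal X | (Q : Set X) ⊆ U} =
          ⋃₀ {T : Set (XCal X) | ∃ Ω : Set X, (IsOpen Ω ∧ IsCompact Ω ∧ Ω ⊆ U) ∧
            T = {Q : XCal X | (Q : Set X) ⊆ Ω}} := by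
        ext Q
        simp only [Set.mem_setOf_eq, Set.mem_sUnion]
        constructor
        · intro hQU
          obtain ⟨Ω, hΩo, hΩc, hQΩ, hΩU⟩ :=
            spectral_squeeze hX (Q.2.2.isCompact_of_spectral hX) hU hQU
          exact ⟨_, ⟨Ω, ⟨hΩo, hΩc, hΩU⟩, rfl⟩, hQΩ⟩
        · rintro ⟨T, ⟨Ω, ⟨-, -, hΩU⟩, rfl⟩, hQΩ⟩
          exact hQΩ.trans hΩU
      rw [this]
      exact isOpen_sUnion fun T hT => by
        obtain ⟨Ω, ⟨hΩo, hΩc, -⟩, rfl⟩ := hT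
        exact isOpen_generateFrom_of_mem ⟨Ω, hΩo, hΩc, rfl⟩
    · -- Vietoris ≤ Zariski
      exact generateFrom_anti fun S hS => by
        obtain ⟨Ω, hΩo, hΩc, rfl⟩ := hS
        exact ⟨Ω, hΩo, rfl⟩
end

section
/- Let X be a spectral space. Then 𝒳(X), endowed with the Zariski topology, is a spectral space; moreover, each basic open set 𝒰(Ω), for Ω a quasi-compact open subset of X, is quasi-compact in 𝒳(X). -/
open Set TopologicalSpace Topology

section Aux

variable {X : Type*} [TopologicalSpace X]

/-- A finite intersection of quasi-compact open sets in a spectral space is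
quasi-compact open. -/
lemma finInter_qcopen (hX : IsSpectralSpace X) :
    ∀ G : Set (Set X), G.Finite → (∀ U ∈ G, IsOpen U ∧ IsCompact U) →
      IsOpen (⋂₀ G) ∧ IsCompact (⋂₀ G) := by
  haveI := hX.2.1
  intro G hG
  refine Set.Finite.induction_on G hG (fun _ => ?_) ?_
  · rw [sInter_empty]; exact ⟨isOpen_univ, isCompact_univ⟩
  · intro a s _ _ ih hmem
    have ha := hmem a (mem_insert _ _)
    have hs := ih fun U hU => hmem U (mem_insert_of_mem _ hU)
    rw [sInter_insert]
    exact ⟨ha.1.inter hs.1, hX.2.2.2.2 a (⋂₀ s) ha.1 ha.2 hs.1 hs.2⟩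

/-- Patch-type finite-intersection-property result for spectral spaces: a closed set
together with a family of quasi-compact open sets having the finite intersection
property has nonempty total intersection. -/
lemma patchFIP (hX : IsSpectralSpace X) (C : Set X) (hC : IsClosed C)
    (𝒱 : Set (Set X)) (h𝒱 : ∀ V ∈ 𝒱, IsOpen V ∧ IsCompact V)
    (hfin : ∀ G ⊆ 𝒱, G.Finite → (C ∩ ⋂₀ G).Nonempty) :
    (C ∩ ⋂₀ 𝒱).Nonempty := by
  classical
  set S : Set (Set X) :=
    {D | IsClosed D ∧ D ⊆ C ∧ ∀ G ⊆ 𝒱, G.Finite → (D ∩ ⋂₀ G).Nonempty} with hS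
  have hCS : C ∈ S := ⟨hC, Subset.rfl, hfin⟩
  -- Zorn: there is a minimal element of S
  obtain ⟨m, -, hmS, hmin⟩ : ∃ m, m ⊆ C ∧ Minimal (· ∈ S) m := by
    refine zorn_superset_nonempty S ?_ C hCS
    intro c hcS hchain hcne
    refine ⟨⋂₀ c, ⟨isClosed_sInter fun D hD => (hcS hD).1, ?_, ?_⟩,
      fun s hs => sInter_subset_of_mem hs⟩
    · obtain ⟨D, hD⟩ := hcne
      exact (sInter_subset_of_mem hD).trans (hcS hD).2.1
    · intro G hG hGfin
      have hWc : IsCompact (⋂₀ G) :=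
        (finInter_qcopen hX G hGfin fun U hU => h𝒱 U (hG hU)).2
      -- use compactness of ⋂₀ G against the chain of closed sets
      have key : (⋂₀ G ∩ ⋂ D : c, (D : Set X)).Nonempty := by
        refine hWc.inter_iInter_nonempty _ (fun D => (hcS D.2).1) ?_
        intro u
        -- a finite subset of a chain has a least element
        have : ∃ D ∈ c, ∀ i ∈ u, D ⊆ (i : Set X) := by
          classical
          induction u using Finset.induction_on with
          | empty => exact hcne.imp fun D hD => ⟨hD, by simp⟩
          | @insert i u hi ih =>
            obtain ⟨D, hDc, hDsub⟩ := ih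
            rcases eq_or_ne D (i : Set X) with h | h
            · exact ⟨D, hDc, fun j hj => by
                rcases Finset.mem_insert.1 hj with rfl | hj
                · exact h.le
                · exact hDsub j hj⟩
            · rcases hchain hDc i.2 h with h' | h'
              · exact ⟨D, hDc, fun j hj => by
                  rcases Finset.mem_insert.1 hj with rfl | hj
                  · exact h'
                  · exact hDsub j hj⟩
              · exact ⟨i, i.2, fun j hj => by
                  rcases Finset.mem_insert.1 hj with rfl | hj
                  · exact Subset.rfl
                  · exact h'.trans (hDsub j hj)⟩
        obtain ⟨D, hDc, hDsub⟩ := this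
        obtain ⟨x, hxD, hxG⟩ := (hcS hDc).2.2 G hG hGfin
        exact ⟨x, hxG, mem_iInter₂.2 fun i hi => hDsub i hi hxD⟩
      obtain ⟨x, hxG, hxc⟩ := key
      exact ⟨x, mem_sInter.2 fun D hD => (mem_iInter.1 hxc) ⟨D, hD⟩, hxG⟩
  -- m is nonempty
  have hmne : m.Nonempty := by simpa using hmS.2.2 ∅ (empty_subset _) finite_empty
  -- m is irreducible
  have hirr : IsIrreducible m := by
    refine ⟨hmne, fun u v hu hv ⟨x, hxm, hxu⟩ ⟨y, hym, hyv⟩ => ?_⟩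
    by_contra hne
    rw [not_nonempty_iff_eq_empty] at hne
    have : m ∩ uᶜ ∈ S ∨ m ∩ vᶜ ∈ S := by
      by_contra h
      push_neg at h
      obtain ⟨h1, h2⟩ := h
      simp only [hS, mem_setOf_eq, not_and, not_forall] at h1 h2
      obtain ⟨G₁, hG₁, hG₁f, hG₁e⟩ :=
        h1 (hmS.1.inter hu.isClosed_compl) ((inter_subset_left).trans hmS.2.1)
      obtain ⟨G₂, hG₂, hG₂f, hG₂e⟩ :=
        h2 (hmS.1.inter hv.isClosed_compl) ((inter_subset_left).trans hmS.2.1)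
      rw [not_nonempty_iff_eq_empty] at hG₁e hG₂e
      have : (m ∩ ⋂₀ (G₁ ∪ G₂)).Nonempty :=
        hmS.2.2 (G₁ ∪ G₂) (union_subset hG₁ hG₂) (hG₁f.union hG₂f)
      obtain ⟨z, hzm, hzG⟩ := this
      rw [sInter_union] at hzG
      have hzu : z ∈ u := by
        by_contra hzu
        have hz1 : z ∈ m ∩ uᶜ ∩ ⋂₀ G₁ := ⟨⟨hzm, hzu⟩, hzG.1⟩
        rw [hG₁e] at hz1; exact hz1
      have hzv : z ∈ v := by
        by_contra hzv
        have hz2 : z ∈ m ∩ vᶜ ∩ ⋂₀ G₂ := ⟨⟨hzm, hzv⟩, hzG.2⟩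
        rw [hG₂e] at hz2; exact hz2
      have hz3 : z ∈ m ∩ (u ∩ v) := ⟨hzm, hzu, hzv⟩
      rw [hne] at hz3; exact hz3
    rcases this with h | h
    · have := hmin h inter_subset_left
      exact (this hxm).2 hxu
    · have := hmin h inter_subset_left
      exact (this hym).2 hyv
  -- use soberness
  haveI := hX.2.2.1
  obtain ⟨x, hx⟩ := QuasiSober.sober hirr hmS.1
  have hxm : x ∈ m := by
    rw [← hx]; exact subset_closure rfl
  refine ⟨x, hmS.2.1 hxm, ?_⟩
  intro V hV
  have : (m ∩ ⋂₀ {V}).Nonempty :=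
    hmS.2.2 {V} (singleton_subset_iff.2 hV) (finite_singleton V)
  rw [sInter_singleton] at this
  obtain ⟨y, hym, hyV⟩ := this
  have hy : y ∈ closure {x} := hx ▸ hym
  obtain ⟨z, hzV, hz⟩ := mem_closure_iff.1 hy V (h𝒱 V hV).1 hyV
  rwa [← hz]

/-- Basic open sets of `𝒳(X)` are open. -/
lemma XCal.isOpen_U {Ω : Set X} (h1 : IsOpen Ω) (h2 : IsCompact Ω) :
    IsOpen {Y : XCal X | (Y : Set X) ⊆ Ω} :=
  isOpen_generateFrom_of_mem ⟨Ω, h1, h2, rfl⟩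

/-- Open sets of `𝒳(X)` are downward closed for inclusion. -/
lemma XCal.open_down {U : Set (XCal X)} (hU : IsOpen U) {Y Z : XCal X}
    (hYZ : (Y : Set X) ⊆ Z) : Z ∈ U → Y ∈ U := by
  have h : GenerateOpen {S : Set (XCal X) | ∃ Ω : Set X, IsOpen Ω ∧ IsCompact Ω ∧
      S = {Y : XCal X | (Y : Set X) ⊆ Ω}} U := hU
  clear hU
  induction h with
  | basic S hS => obtain ⟨Ω, -, -, rfl⟩ := hS; exact fun hZ => hYZ.trans hZ
  | univ => exact fun _ => trivial
  | inter s t _ _ ihs iht => exact fun hZ => ⟨ihs hZ.1, iht hZ.2⟩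
  | sUnion 𝒮 _ ih =>
    rintro ⟨t, ht, hZt⟩
    exact ⟨t, ht, ih t ht hZt⟩

/-- Every open neighbourhood in `𝒳(X)` contains a basic one. -/
lemma XCal.exists_basic (hX : IsSpectralSpace X) {U : Set (XCal X)} (hU : IsOpen U)
    {Z : XCal X} :
    Z ∈ U → ∃ Ω : Set X, IsOpen Ω ∧ IsCompact Ω ∧ (Z : Set X) ⊆ Ω ∧
      {Y : XCal X | (Y : Set X) ⊆ Ω} ⊆ U := by
  haveI := hX.2.1
  have h : GenerateOpen {S : Set (XCal X) | ∃ Ω : Set X, IsOpen Ω ∧ IsCompact Ω ∧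
      S = {Y : XCal X | (Y : Set X) ⊆ Ω}} U := hU
  clear hU
  induction h with
  | basic S hS =>
    obtain ⟨Ω, h1, h2, rfl⟩ := hS
    exact fun hZU => ⟨Ω, h1, h2, hZU, Subset.rfl⟩
  | univ => exact fun _ => ⟨univ, isOpen_univ, isCompact_univ, subset_univ _, subset_univ _⟩
  | inter s t _ _ ihs iht =>
    intro hZU
    obtain ⟨Ω₁, ho₁, hc₁, hZ₁, hs₁⟩ := ihs hZU.1
    obtain ⟨Ω₂, ho₂, hc₂, hZ₂, hs₂⟩ := iht hZU.2
    refine ⟨Ω₁ ∩ Ω₂, ho₁.inter ho₂, hX.2.2.2.2 _ _ ho₁ hc₁ ho₂ hc₂,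
      subset_inter hZ₁ hZ₂, fun Y hY => ⟨hs₁ ?_, hs₂ ?_⟩⟩
    · exact hY.trans inter_subset_left
    · exact hY.trans inter_subset_right
  | sUnion 𝒮 _ ih =>
    rintro ⟨t, ht, hZt⟩
    obtain ⟨Ω, h1, h2, h3, h4⟩ := ih t ht hZt
    exact ⟨Ω, h1, h2, h3, h4.trans (subset_sUnion_of_mem ht)⟩

/-- A quasi-compact open set, viewed as a subset, is inverse-closed. -/
lemma invClosed_of_qcopen {Ω : Set X} (h1 : IsOpen Ω) (h2 : IsCompact Ω) :
    InvClosed Ω :=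
  ⟨{Ω}, fun U hU => by rw [mem_singleton_iff] at hU; subst hU; exact ⟨h1, h2⟩,
    (sInter_singleton Ω).symm⟩

/-- The basic open sets `𝒰(Ω)` of `𝒳(X)` are quasi-compact. -/
lemma XCal.U_compact {Ω : Set X} (h1 : IsOpen Ω) (h2 : IsCompact Ω) :
    IsCompact {Y : XCal X | (Y : Set X) ⊆ Ω} := by
  rcases eq_empty_or_nonempty Ω with rfl | hne
  · convert isCompact_empty
    ext Y
    simp only [mem_setOf_eq, subset_empty_iff, mem_empty_iff_false, iff_false]
    exact fun h => Y.2.1.ne_empty h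
  · refine isCompact_of_finite_subcover fun {ι} V hVopen hcover => ?_
    set ΩX : XCal X := ⟨Ω, hne, invClosed_of_qcopen h1 h2⟩ with hΩX
    have hΩmem : ΩX ∈ {Y : XCal X | (Y : Set X) ⊆ Ω} := Subset.rfl
    obtain ⟨i₀, hi₀⟩ := mem_iUnion.1 (hcover hΩmem)
    refine ⟨{i₀}, fun Y hY => ?_⟩
    simp only [Finset.mem_singleton, iUnion_iUnion_eq_left]
    exact XCal.open_down (hVopen i₀)
      (show (Y : Set X) ⊆ (ΩX : Set X) from hY) hi₀

/-- An inverse-closed set is the intersection of all quasi-compact open sets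
containing it. -/
lemma invClosed_eq_sInter {Y : Set X} (h : InvClosed Y) :
    Y = ⋂₀ {Ω : Set X | (IsOpen Ω ∧ IsCompact Ω) ∧ Y ⊆ Ω} := by
  obtain ⟨𝒪, h𝒪, rfl⟩ := h
  apply subset_antisymm
  · exact fun x hx Ω hΩ => hΩ.2 hx
  · intro x hx
    refine mem_sInter.2 fun U hU => ?_
    exact mem_sInter.1 hx U ⟨h𝒪 U hU, sInter_subset_of_mem hU⟩

end Aux


/-- For a spectral space `X`, the space `𝒳(X)` with the Zariski
topology is a spectral space, and each basic open set `𝒰(Ω)`, for `Ω`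
quasi-compact open in `X`, is quasi-compact in `𝒳(X)`. -/
theorem stmt5 {X : Type*} [TopologicalSpace X] (hX : IsSpectralSpace X) :
    IsSpectralSpace (XCal X) ∧
    ∀ Ω : Set X, IsOpen Ω → IsCompact Ω →
      IsCompact {Y : XCal X | (Y : Set X) ⊆ Ω} := by
  classical
  haveI := hX.2.1
  refine ⟨⟨?_, ?_, ?_, ?_, ?_⟩, fun Ω h1 h2 => XCal.U_compact h1 h2⟩
  · -- T0
    rw [t0Space_iff_inseparable]
    intro Y Z h
    apply Subtype.ext
    have : ∀ Ω : Set X, IsOpen Ω ∧ IsCompact Ω → ((Y : Set X) ⊆ Ω ↔ (Z : Set X) ⊆ Ω) := by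
      intro Ω hΩ
      exact (inseparable_iff_forall_isOpen.1 h) _ (XCal.isOpen_U hΩ.1 hΩ.2)
    have hsets : {Ω : Set X | (IsOpen Ω ∧ IsCompact Ω) ∧ (Y : Set X) ⊆ Ω} =
        {Ω : Set X | (IsOpen Ω ∧ IsCompact Ω) ∧ (Z : Set X) ⊆ Ω} := by
      ext Ω
      exact and_congr_right fun hΩ => this Ω hΩ
    rw [invClosed_eq_sInter Y.2.2, invClosed_eq_sInter Z.2.2, hsets]
  · -- compact
    refine ⟨?_⟩
    have : (univ : Set (XCal X)) = {Y : XCal X | (Y : Set X) ⊆ univ} := by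
      ext Y; simp
    rw [this]
    exact XCal.U_compact isOpen_univ isCompact_univ
  · -- quasi-sober
    refine ⟨fun {𝒞} hirr hcl => ?_⟩
    set F : Set (Set X) :=
      {Ω : Set X | (IsOpen Ω ∧ IsCompact Ω) ∧ ∃ Z ∈ 𝒞, (Z : XCal X).1 ⊆ Ω} with hF
    have hFqc : ∀ V ∈ F, IsOpen V ∧ IsCompact V := fun V hV => hV.1
    -- finite subfamilies of F contain elements of 𝒞
    have key : ∀ G : Set (Set X), G.Finite → G ⊆ F →
        ∃ Z ∈ 𝒞, (Z : XCal X).1 ⊆ ⋂₀ G := by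
      intro G hGfin
      refine Set.Finite.induction_on G hGfin (fun _ => ?_) ?_
      · obtain ⟨Z, hZ⟩ := hirr.1
        exact ⟨Z, hZ, by simp⟩
      · intro Ω G' hΩG' hG'fin ih hsub
        obtain ⟨Z₁, hZ₁𝒞, hZ₁⟩ := (hsub (mem_insert _ _)).2
        obtain ⟨Z₂, hZ₂𝒞, hZ₂⟩ := ih fun U hU => hsub (mem_insert_of_mem _ hU)
        have hΩqc := (hsub (mem_insert _ _)).1
        have hG'qc := finInter_qcopen hX G' hG'fin fun U hU =>
          (hsub (mem_insert_of_mem _ hU)).1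
        obtain ⟨Z, hZ𝒞, hZa, hZb⟩ := hirr.2 _ _ (XCal.isOpen_U hΩqc.1 hΩqc.2)
          (XCal.isOpen_U hG'qc.1 hG'qc.2) ⟨Z₁, hZ₁𝒞, hZ₁⟩ ⟨Z₂, hZ₂𝒞, hZ₂⟩
        refine ⟨Z, hZ𝒞, ?_⟩
        rw [sInter_insert]
        exact subset_inter hZa hZb
    -- the candidate generic point
    have hY0ne : (⋂₀ F).Nonempty := by
      have := patchFIP hX univ isClosed_univ F hFqc ?_
      · simpa using this
      · intro G hG hGfin
        obtain ⟨Z, -, hZ⟩ := key G hGfin hG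
        exact ⟨Z.2.1.choose, trivial, hZ (Z.2.1.choose_spec)⟩
    set Y0 : XCal X := ⟨⋂₀ F, hY0ne, ⟨F, hFqc, rfl⟩⟩ with hY0
    -- every qc open containing Y0 is in F
    have subOmega : ∀ Ω : Set X, IsOpen Ω → IsCompact Ω → (Y0 : Set X) ⊆ Ω → Ω ∈ F := by
      intro Ω hΩo hΩc hsub
      have : ∃ G ⊆ F, G.Finite ∧ (Ωᶜ ∩ ⋂₀ G) = ∅ := by
        by_contra h
        push_neg at h
        have := patchFIP hX Ωᶜ hΩo.isClosed_compl F hFqc ?_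
        · obtain ⟨x, hx1, hx2⟩ := this
          exact hx1 (hsub hx2)
        · exact h
      obtain ⟨G, hGF, hGfin, hGe⟩ := this
      obtain ⟨Z, hZ𝒞, hZ⟩ := key G hGfin hGF
      have hZΩ : (Z : Set X) ⊆ Ω := by
        intro x hx
        by_contra hxΩ
        have hx2 : x ∈ Ωᶜ ∩ ⋂₀ G := ⟨hxΩ, hZ hx⟩
        rw [hGe] at hx2; exact hx2
      exact ⟨⟨hΩo, hΩc⟩, Z, hZ𝒞, hZΩ⟩
    -- Y0 ∈ 𝒞
    have hY0𝒞 : Y0 ∈ 𝒞 := by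
      by_contra h
      obtain ⟨Ω, hΩo, hΩc, hY0Ω, hsub⟩ :=
        XCal.exists_basic hX hcl.isOpen_compl (h : Y0 ∈ 𝒞ᶜ)
      obtain ⟨-, Z, hZ𝒞, hZΩ⟩ := subOmega Ω hΩo hΩc hY0Ω
      exact hsub hZΩ hZ𝒞
    refine ⟨Y0, ?_⟩
    -- closure {Y0} = 𝒞
    apply subset_antisymm
    · exact closure_minimal (singleton_subset_iff.2 hY0𝒞) hcl
    · intro Z hZ𝒞
      rw [mem_closure_iff]
      intro o ho hZo
      refine ⟨Y0, XCal.open_down ho ?_ hZo, rfl⟩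
      -- Y0 ⊆ Z
      have hZeq := invClosed_eq_sInter Z.2.2
      intro x hx
      rw [hZeq]
      refine mem_sInter.2 fun Ω hΩ => ?_
      exact mem_sInter.1 hx Ω ⟨hΩ.1, Z, hZ𝒞, hΩ.2⟩
  · -- basis
    refine isTopologicalBasis_of_isOpen_of_nhds (fun u hu => hu.1) ?_
    intro Z U hZU hU
    obtain ⟨Ω, h1, h2, h3, h4⟩ := XCal.exists_basic hX hU hZU
    exact ⟨{Y : XCal X | (Y : Set X) ⊆ Ω}, ⟨XCal.isOpen_U h1 h2, XCal.U_compact h1 h2⟩,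
      h3, h4⟩
  · -- intersections of qc opens are qc
    have decomp : ∀ U : Set (XCal X), IsOpen U → IsCompact U →
        ∃ s : Finset (Set X), (∀ Ω ∈ s, IsOpen Ω ∧ IsCompact Ω) ∧
          U = ⋃ Ω ∈ s, {Y : XCal X | (Y : Set X) ⊆ Ω} := by
      intro U hUo hUc
      set ι := {Ω : Set X // IsOpen Ω ∧ IsCompact Ω ∧ {Y : XCal X | (Y : Set X) ⊆ Ω} ⊆ U}
      have hcover : U ⊆ ⋃ i : ι, {Y : XCal X | (Y : Set X) ⊆ (i : Set X)} := by
        intro Z hZ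
        obtain ⟨Ω, h1, h2, h3, h4⟩ := XCal.exists_basic hX hUo hZ
        exact mem_iUnion.2 ⟨⟨Ω, h1, h2, h4⟩, h3⟩
      obtain ⟨t, ht⟩ := hUc.elim_finite_subcover _
        (fun i : ι => XCal.isOpen_U i.2.1 i.2.2.1) hcover
      refine ⟨t.image Subtype.val, ?_, ?_⟩
      · intro Ω hΩ
        obtain ⟨i, -, rfl⟩ := Finset.mem_image.1 hΩ
        exact ⟨i.2.1, i.2.2.1⟩
      · apply subset_antisymm
        · intro Z hZ
          obtain ⟨i, hit, hZi⟩ := mem_iUnion₂.1 (ht hZ)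
          exact mem_iUnion₂.2 ⟨(i : Set X), Finset.mem_image_of_mem _ hit, hZi⟩
        · intro Z hZ
          obtain ⟨Ω, hΩ, hZΩ⟩ := mem_iUnion₂.1 hZ
          obtain ⟨i, -, rfl⟩ := Finset.mem_image.1 hΩ
          exact i.2.2.2 hZΩ
    intro U V hUo hUc hVo hVc
    obtain ⟨s, hs, rfl⟩ := decomp U hUo hUc
    obtain ⟨s', hs', rfl⟩ := decomp V hVo hVc
    have heq : (⋃ Ω ∈ s, {Y : XCal X | (Y : Set X) ⊆ Ω}) ∩
        (⋃ Ω ∈ s', {Y : XCal X | (Y : Set X) ⊆ Ω}) =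
        ⋃ Ω ∈ s, ⋃ Ω' ∈ s', {Y : XCal X | (Y : Set X) ⊆ Ω ∩ Ω'} := by
      ext Y
      simp only [mem_inter_iff, mem_iUnion, mem_setOf_eq, subset_inter_iff]
      tauto
    rw [heq]
    refine s.isCompact_biUnion fun Ω hΩ => s'.isCompact_biUnion fun Ω' hΩ' => ?_
    exact XCal.U_compact ((hs Ω hΩ).1.inter (hs' Ω' hΩ').1)
      (hX.2.2.2.2 _ _ (hs Ω hΩ).1 (hs Ω hΩ).2 (hs' Ω' hΩ').1 (hs' Ω' hΩ').2)
end

section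
/- Let X be a spectral space. The canonical map φ : X → 𝒳(X), defined by φ(x) := {x}^gen, is a spectral topological embedding: it is injective, a homeomorphism onto its image, and the preimage of every quasi-compact open subset of 𝒳(X) is a quasi-compact open subset of X. In particular, φ is an order-preserving and order-reflecting embedding for the orders induced by the topologies. -/
open Set TopologicalSpace Topology

section Aux
variable {X : Type*} [TopologicalSpace X]

lemma mem_genOf_singleton {x z : X} : z ∈ genOf ({x} : Set X) ↔ x ∈ closure {z} := by
  simp [genOf, spord]

lemma self_mem_genOf (x : X) : x ∈ genOf ({x} : Set X) :=
  mem_genOf_singleton.mpr (subset_closure rfl)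

lemma genOf_subset_iff {x : X} {Ω : Set X} (hΩ : IsOpen Ω) :
    genOf ({x} : Set X) ⊆ Ω ↔ x ∈ Ω := by
  constructor
  · intro h; exact h (self_mem_genOf x)
  · intro hx z hz
    have hcl : x ∈ closure {z} := mem_genOf_singleton.mp hz
    have := (mem_closure_iff.mp hcl) Ω hΩ hx
    simpa using this

lemma genOf_invClosed (hX : IsSpectralSpace X) (x : X) :
    InvClosed (genOf ({x} : Set X)) := by
  refine ⟨{U | (IsOpen U ∧ IsCompact U) ∧ x ∈ U}, fun U hU => hU.1, ?_⟩
  ext z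
  rw [mem_genOf_singleton, hX.2.2.2.1.mem_closure_iff]
  constructor
  · intro h U hU
    have := h U hU.1 hU.2
    simpa using this
  · intro h o ho hxo
    refine ⟨z, h o ⟨ho, hxo⟩, rfl⟩

end Aux

/-- The canonical map `φ : X → 𝒳(X)`, `x ↦ {x}^gen`, is a spectral
topological embedding, and it preserves and reflects the order induced by the
topologies. -/
theorem stmt7 {X : Type*} [TopologicalSpace X] (hX : IsSpectralSpace X) :
    ∃ φ : X → XCal X, (∀ x : X, (φ x : Set X) = genOf {x}) ∧
      IsEmbedding φ ∧ SpecMap φ ∧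
      ∀ x y : X, spord x y ↔ spord (φ x) (φ y) := by
  haveI hT0 := hX.1
  haveI hC := hX.2.1
  have hBasis := hX.2.2.2.1
  have hInter := hX.2.2.2.2
  set B : Set (Set (XCal X)) := {S : Set (XCal X) | ∃ Ω : Set X, IsOpen Ω ∧ IsCompact Ω ∧
    S = {Y : XCal X | (Y : Set X) ⊆ Ω}} with hBdef
  -- B is a topological basis of XCal X
  have hB : IsTopologicalBasis B := by
    refine ⟨?_, ?_, rfl⟩
    · rintro S₁ ⟨Ω₁, hΩ₁o, hΩ₁c, rfl⟩ S₂ ⟨Ω₂, hΩ₂o, hΩ₂c, rfl⟩ Y hY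
      refine ⟨{Z : XCal X | (Z : Set X) ⊆ Ω₁ ∩ Ω₂},
        ⟨Ω₁ ∩ Ω₂, hΩ₁o.inter hΩ₂o, hInter _ _ hΩ₁o hΩ₁c hΩ₂o hΩ₂c, rfl⟩, ?_, ?_⟩
      · exact subset_inter hY.1 hY.2
      · intro Z hZ; exact ⟨hZ.trans inter_subset_left, hZ.trans inter_subset_right⟩
    · apply eq_univ_of_univ_subset
      intro Y _
      exact ⟨{Z : XCal X | (Z : Set X) ⊆ univ}, ⟨univ, isOpen_univ, isCompact_univ, rfl⟩,
        subset_univ _⟩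
  -- the canonical map
  let φ : X → XCal X := fun x => ⟨genOf {x}, ⟨x, self_mem_genOf x⟩, genOf_invClosed hX x⟩
  have hpre : ∀ Ω : Set X, IsOpen Ω → φ ⁻¹' {Y : XCal X | (Y : Set X) ⊆ Ω} = Ω := by
    intro Ω hΩ; ext x; exact genOf_subset_iff hΩ
  have hInd : IsInducing φ := by
    rw [isInducing_iff]
    have h1 : (XCal.instTop X) = generateFrom B := rfl
    rw [h1, induced_generateFrom_eq]
    have h2 : preimage φ '' B = {U : Set X | IsOpen U ∧ IsCompact U} := by
      ext U
      constructor
      · rintro ⟨S, ⟨Ω, hΩo, hΩc, rfl⟩, rfl⟩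
        rw [hpre Ω hΩo]; exact ⟨hΩo, hΩc⟩
      · rintro ⟨hUo, hUc⟩
        exact ⟨{Y : XCal X | (Y : Set X) ⊆ U}, ⟨U, hUo, hUc, rfl⟩, hpre U hUo⟩
    rw [h2]
    exact hBasis.eq_generateFrom
  have hInj : Function.Injective φ := by
    intro x y h
    have h1 : genOf ({x} : Set X) = genOf {y} := congrArg Subtype.val h
    have hxy : y ∈ closure ({x} : Set X) :=
      mem_genOf_singleton.mp (h1 ▸ self_mem_genOf x)
    have hyx : x ∈ closure ({y} : Set X) :=
      mem_genOf_singleton.mp (h1.symm ▸ self_mem_genOf y)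
    exact ((specializes_iff_mem_closure.mpr hxy).antisymm
      (specializes_iff_mem_closure.mpr hyx)).eq
  refine ⟨φ, fun x => rfl, ⟨hInd, hInj⟩, ?_, ?_⟩
  · -- spectral map
    intro W hWo hWc
    obtain ⟨S, hSB, rfl⟩ := hB.open_eq_sUnion hWo
    have hqc : ∀ i : S, IsOpen (φ ⁻¹' (i : Set (XCal X))) ∧ IsCompact (φ ⁻¹' (i : Set (XCal X))) := by
      rintro ⟨s, hs⟩
      obtain ⟨Ω, hΩo, hΩc, rfl⟩ := hSB hs
      simp only [hpre Ω hΩo]; exact ⟨hΩo, hΩc⟩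
    obtain ⟨t, ht⟩ := hWc.elim_finite_subcover (fun s : S => (s : Set (XCal X)))
      (fun s => hB.isOpen (hSB s.2)) (sUnion_eq_iUnion ▸ le_refl _)
    have heq : ⋃₀ S = ⋃ i ∈ t, (i : Set (XCal X)) :=
      subset_antisymm ht (iUnion₂_subset fun i _ => subset_sUnion_of_mem i.2)
    rw [heq, preimage_iUnion₂]
    exact ⟨isOpen_biUnion fun i _ => (hqc i).1,
      t.finite_toSet.isCompact_biUnion fun i _ => (hqc i).2⟩
  · -- order preserving and reflecting
    intro x y
    rw [spord, spord, hBasis.mem_closure_iff, hB.mem_closure_iff]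
    constructor
    · rintro h S ⟨Ω, hΩo, hΩc, rfl⟩ hyS
      have hyΩ : y ∈ Ω := hyS (self_mem_genOf y)
      obtain ⟨z, hzΩ, hzx⟩ := h Ω ⟨hΩo, hΩc⟩ hyΩ
      have hxΩ : x ∈ Ω := by rwa [mem_singleton_iff.mp hzx] at hzΩ
      exact ⟨φ x, (genOf_subset_iff hΩo).mpr hxΩ, rfl⟩
    · rintro h Ω ⟨hΩo, hΩc⟩ hyΩ
      obtain ⟨Z, hZ, hZx⟩ := h {Y : XCal X | (Y : Set X) ⊆ Ω} ⟨Ω, hΩo, hΩc, rfl⟩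
        ((genOf_subset_iff hΩo).mpr hyΩ)
      have : φ x ∈ {Y : XCal X | (Y : Set X) ⊆ Ω} := mem_singleton_iff.mp hZx ▸ hZ
      exact ⟨x, (genOf_subset_iff hΩo).mp this, rfl⟩
end

section
/- Let X be a spectral space and φ : X → 𝒳(X) the canonical embedding x ↦ {x}^gen. Then the image φ(X) is dense in 𝒳(X) with respect to the Zariski topology. -/
open Set TopologicalSpace Topology

/-- The image of the canonical embedding `φ : X → 𝒳(X)`, `x ↦ {x}^gen`,
is dense in `𝒳(X)` with respect to the Zariski topology. -/
theorem stmt9 {X : Type*} [TopologicalSpace X] (hX : IsSpectralSpace X)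
    (φ : X → XCal X) (hφ : ∀ x : X, (φ x : Set X) = genOf {x}) :
    Dense (Set.range φ) := by
  -- Key: inverse-closed sets are closed under generization.
  have key : ∀ (Y : XCal X) (y : X), y ∈ (Y : Set X) → genOf {y} ⊆ (Y : Set X) := by
    rintro ⟨Y, hne, 𝒪, h𝒪, rfl⟩ y hy z hz
    obtain ⟨s, hs, hzs⟩ := hz
    have hs' : s = y := hs
    intro U hU
    -- s ∈ closure {z} and s ∈ U open, so z ∈ U
    have hyU : s ∈ U := hs' ▸ hy U hU
    have := mem_closure_iff.mp hzs U (h𝒪 U hU).1 hyU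
    obtain ⟨w, hwU, hw⟩ := this
    rcases hw with rfl
    exact hwU
  -- Every open set containing Y contains φ y for every y ∈ Y.
  have main : ∀ U : Set (XCal X), IsOpen U → ∀ Y ∈ U, ∀ y ∈ (Y : Set X), φ y ∈ U := by
    intro U hU
    induction hU with
    | basic S hS =>
      obtain ⟨Ω, hΩo, hΩc, rfl⟩ := hS
      intro Y hY y hy
      have : (φ y : Set X) ⊆ Ω := by
        rw [hφ]
        exact (key Y y hy).trans hY
      exact this
    | univ => intro Y _ y _; trivial
    | inter U V hUo hVo ihU ihV =>
      intro Y hY y hy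
      exact ⟨ihU Y hY.1 y hy, ihV Y hY.2 y hy⟩
    | sUnion 𝒮 h𝒮 ih =>
      rintro Y ⟨S, hS, hYS⟩ y hy
      exact ⟨S, hS, ih S hS Y hYS y hy⟩
  rw [dense_iff_inter_open]
  rintro U hU ⟨Y, hY⟩
  obtain ⟨y, hy⟩ := Y.2.1
  exact ⟨φ y, main U hU Y hY y hy, y, rfl⟩
end

section
/- Let X be a spectral space and φ : X → 𝒳(X) the canonical embedding x ↦ {x}^gen. Then φ is surjective (i.e., φ(X) = 𝒳(X)) if and only if the specialization order ≤ on X is a total (linear) order. -/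
open Set TopologicalSpace Topology

theorem spord_refl {X : Type*} [TopologicalSpace X] (x : X) : spord x x :=
  subset_closure rfl

theorem spord_trans {X : Type*} [TopologicalSpace X] {a b c : X}
    (h1 : spord a b) (h2 : spord b c) : spord a c :=
  closure_minimal (Set.singleton_subset_iff.mpr h1) isClosed_closure h2

theorem spord_mem_open {X : Type*} [TopologicalSpace X] {a b : X} {U : Set X}
    (h : spord a b) (hU : IsOpen U) (hb : b ∈ U) : a ∈ U := by
  obtain ⟨w, hwU, hw⟩ := (mem_closure_iff.mp h) U hU hb
  rwa [← hw]

/-- The canonical embedding `φ : X → 𝒳(X)`, `x ↦ {x}^gen`, is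
surjective iff the specialization order on `X` is total. -/
theorem stmt10 {X : Type*} [TopologicalSpace X] (hX : IsSpectralSpace X)
    (φ : X → XCal X) (hφ : ∀ x : X, (φ x : Set X) = genOf {x}) :
    Function.Surjective φ ↔ ∀ x y : X, spord x y ∨ spord y x := by
  classical
  obtain ⟨hT0, hComp, hSober, hBasis, hInterC⟩ := hX
  constructor
  · -- surjective → total
    intro hsurj x y
    -- the union genOf {x} ∪ genOf {y} is inverse-closed
    have hunion : genOf ({x} : Set X) ∪ genOf ({y} : Set X) =
        ⋂₀ {U : Set X | (IsOpen U ∧ IsCompact U) ∧ x ∈ U ∧ y ∈ U} := by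
      ext z
      simp only [genOf, spord, Set.mem_union, Set.mem_setOf_eq, Set.mem_sInter,
        Set.mem_singleton_iff]
      constructor
      · rintro (⟨s, rfl, hz⟩ | ⟨s, rfl, hz⟩) U ⟨⟨hUo, _⟩, hxU, hyU⟩
        · exact spord_mem_open hz hUo hxU
        · exact spord_mem_open hz hUo hyU
      · intro hz
        by_contra hc
        have hx' : x ∉ closure {z} := fun h => hc (Or.inl ⟨x, rfl, h⟩)
        have hy' : y ∉ closure {z} := fun h => hc (Or.inr ⟨y, rfl, h⟩)
        rw [mem_closure_iff] at hx' hy'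
        push_neg at hx' hy'
        obtain ⟨o1, ho1, hxo1, hzo1⟩ := hx'
        obtain ⟨o2, ho2, hyo2, hzo2⟩ := hy'
        obtain ⟨U, hU, hxU, hUo1⟩ := hBasis.exists_subset_of_mem_open hxo1 ho1
        obtain ⟨V, hV, hyV, hVo2⟩ := hBasis.exists_subset_of_mem_open hyo2 ho2
        have := hz (U ∪ V) ⟨⟨hU.1.union hV.1, hU.2.union hV.2⟩, Or.inl hxU, Or.inr hyV⟩
        rcases this with h | h
        · exact (Set.not_nonempty_iff_eq_empty.mpr hzo1) ⟨z, hUo1 h, rfl⟩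
        · exact (Set.not_nonempty_iff_eq_empty.mpr hzo2) ⟨z, hVo2 h, rfl⟩
    have hInv : InvClosed (genOf ({x} : Set X) ∪ genOf ({y} : Set X)) :=
      ⟨_, fun U hU => hU.1, hunion⟩
    have hne : (genOf ({x} : Set X) ∪ genOf ({y} : Set X)).Nonempty :=
      ⟨x, Or.inl ⟨x, rfl, spord_refl x⟩⟩
    obtain ⟨z, hz⟩ := hsurj ⟨_, hne, hInv⟩
    have hzeq : genOf ({z} : Set X) = genOf ({x} : Set X) ∪ genOf ({y} : Set X) := by
      rw [← hφ z, hz]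
    have hxz : spord x z := by
      have : x ∈ genOf ({z} : Set X) := hzeq ▸ (Or.inl ⟨x, rfl, spord_refl x⟩)
      obtain ⟨s, hs, h⟩ := this
      rwa [Set.mem_singleton_iff.mp hs] at h
    have hyz : spord y z := by
      have : y ∈ genOf ({z} : Set X) := hzeq ▸ (Or.inr ⟨y, rfl, spord_refl y⟩)
      obtain ⟨s, hs, h⟩ := this
      rwa [Set.mem_singleton_iff.mp hs] at h
    have hzin : z ∈ genOf ({x} : Set X) ∪ genOf ({y} : Set X) := by
      rw [← hzeq]; exact ⟨z, rfl, spord_refl z⟩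
    rcases hzin with ⟨s, hs, h⟩ | ⟨s, hs, h⟩
    · rw [Set.mem_singleton_iff.mp hs] at h
      exact Or.inr (spord_trans hyz h)
    · rw [Set.mem_singleton_iff.mp hs] at h
      exact Or.inl (spord_trans hxz h)
  · -- total → surjective
    intro htot
    rintro ⟨Y, hYne, 𝒪, h𝒪, rfl⟩
    haveI := hComp
    haveI := hSober
    set Y : Set X := ⋂₀ 𝒪 with hYdef
    -- the intersection of closures of points of Y
    set C : Set X := ⋂ i : Y, closure {(i : X)} with hCdef
    have hCclosed : IsClosed C := isClosed_iInter fun i => isClosed_closure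
    -- finite subfamilies of the chain have a max
    have hmax : ∀ u : Finset Y, u.Nonempty → ∃ a ∈ u, ∀ b ∈ u, spord (b : X) (a : X) := by
      intro u
      induction u using Finset.induction_on with
      | empty => intro h; exact absurd h (by simp)
      | @insert a u ha ih =>
        intro _
        by_cases hu : u.Nonempty
        · obtain ⟨m, hm, hmax⟩ := ih hu
          rcases htot (a : X) (m : X) with h | h
          · exact ⟨m, Finset.mem_insert_of_mem hm, by
              intro b hb
              rcases Finset.mem_insert.mp hb with rfl | hb
              · exact h
              · exact hmax b hb⟩
          · exact ⟨a, Finset.mem_insert_self a u, by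
              intro b hb
              rcases Finset.mem_insert.mp hb with rfl | hb
              · exact spord_refl _
              · exact spord_trans (hmax b hb) h⟩
        · refine ⟨a, Finset.mem_insert_self a u, ?_⟩
          intro b hb
          rcases Finset.mem_insert.mp hb with rfl | hb
          · exact spord_refl _
          · exact absurd ⟨b, hb⟩ hu
    -- every compact set containing Y meets C
    have hmeet : ∀ U : Set X, IsCompact U → Y ⊆ U → (U ∩ C).Nonempty := by
      intro U hUc hYU
      apply hUc.inter_iInter_nonempty (fun i : Y => closure {(i : X)})
        (fun i => isClosed_closure)
      intro u
      by_cases hu : u.Nonempty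
      · obtain ⟨a, ha, hmaxa⟩ := hmax u hu
        refine ⟨(a : X), hYU a.2, ?_⟩
        simp only [Set.mem_iInter]
        intro i hi
        exact hmaxa i hi
      · rw [Finset.not_nonempty_iff_eq_empty] at hu
        subst hu
        obtain ⟨y, hy⟩ := hYne
        exact ⟨y, hYU hy, by simp⟩
    have hCne : C.Nonempty := by
      obtain ⟨w, _, hw⟩ := hmeet Set.univ isCompact_univ (Set.subset_univ _)
      exact ⟨w, hw⟩
    have hCpre : IsPreirreducible C := by
      intro u v hu hv ⟨a, haC, hau⟩ ⟨b, hbC, hbv⟩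
      rcases htot a b with h | h
      · exact ⟨a, haC, hau, spord_mem_open h hv hbv⟩
      · exact ⟨b, hbC, spord_mem_open h hu hau, hbv⟩
    obtain ⟨ξ, hξ⟩ := hSober.sober ⟨hCne, hCpre⟩ hCclosed
    have hξC : ξ ∈ C := hξ ▸ subset_closure rfl
    -- ξ belongs to every U ∈ 𝒪
    have hξmem : ∀ U ∈ 𝒪, ξ ∈ U := by
      intro U hU
      obtain ⟨z, hzU, hzC⟩ := hmeet U (h𝒪 U hU).2 (Set.sInter_subset_of_mem hU)
      have : z ∈ closure {ξ} := hξ ▸ hzC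
      exact spord_mem_open this (h𝒪 U hU).1 hzU
    refine ⟨ξ, Subtype.ext ?_⟩
    rw [hφ ξ]
    ext z
    simp only [genOf, Set.mem_setOf_eq, Set.mem_singleton_iff]
    constructor
    · rintro ⟨s, rfl, hz⟩
      intro U hU
      exact spord_mem_open hz (h𝒪 U hU).1 (hξmem U hU)
    · intro hzY
      refine ⟨ξ, rfl, ?_⟩
      have : ξ ∈ closure {z} := Set.mem_iInter.mp hξC ⟨z, hzY⟩
      exact this
end
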